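/- The subalgebra F of functions on G† is stable under the infinitesimal translation action: for every f ∈ F and every 1 ≤ ℓ ≤ n, the function on G† given by ψ ↦ (d/dt)|_{t=0} f(ψ ◁ τ_{t e_ℓ}), where (ψ ◁ τ_b)(x) = ψ(x + b) − ψ(b) and e_ℓ is the ℓ-th standard basis vector, is well defined (the derivative exists) and again belongs to F; on the generators it is given by β^i_{j₁…j_k} ↦ β^i_{j₁…j_k ℓ}. -/

import Mathlib

/-- A `C^∞` diffeomorphism of `ℝⁿ` (modeled as `Fin n → ℝ`). -/
structure Diffeo (n : ℕ) where
  toFun : (Fin n → ℝ) → (Fin n → ℝ)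
  invFun : (Fin n → ℝ) → (Fin n → ℝ)
  smooth : ContDiff ℝ (⊤ : ℕ∞) toFun
  smooth_inv : ContDiff ℝ (⊤ : ℕ∞) invFun
  left_inv : Function.LeftInverse invFun toFun
  right_inv : Function.RightInverse invFun toFun

/-- Composition of diffeomorphisms. -/
def Diffeo.comp {n : ℕ} (φ ψ : Diffeo n) : Diffeo n where
  toFun := φ.toFun ∘ ψ.toFun
  invFun := ψ.invFun ∘ φ.invFun
  smooth := φ.smooth.comp ψ.smooth
  smooth_inv := ψ.smooth_inv.comp φ.smooth_inv
  left_inv := fun x => by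
    simp only [Function.comp_apply]
    rw [φ.left_inv (ψ.toFun x), ψ.left_inv x]
  right_inv := fun y => by
    simp only [Function.comp_apply]
    rw [ψ.right_inv (φ.invFun y), φ.right_inv y]

/-- The group `G†` of `C^∞` diffeomorphisms of `ℝⁿ` fixing `0`. -/
def Gd (n : ℕ) := {ψ : Diffeo n // ψ.toFun 0 = 0}

/-- Composition in `G†`. -/
def Gd.comp {n : ℕ} (ψ₁ ψ₂ : Gd n) : Gd n :=
  ⟨ψ₁.val.comp ψ₂.val, by
    show ψ₁.val.toFun (ψ₂.val.toFun 0) = 0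
    rw [ψ₂.prop, ψ₁.prop]⟩

/-- The inverse of a diffeomorphism. -/
def Diffeo.symm {n : ℕ} (ψ : Diffeo n) : Diffeo n :=
  ⟨ψ.invFun, ψ.toFun, ψ.smooth_inv, ψ.smooth, ψ.right_inv, ψ.left_inv⟩

/-- Inversion in `G†`. -/
def Gd.inv {n : ℕ} (ψ : Gd n) : Gd n :=
  ⟨ψ.val.symm, by
    show ψ.val.invFun 0 = 0
    have h := ψ.val.left_inv 0
    rw [ψ.prop] at h
    exact h⟩

/-- Partial derivative in the `j`-th coordinate direction. -/
noncomputable def pd {n : ℕ} (j : Fin n) (f : (Fin n → ℝ) → ℝ) : (Fin n → ℝ) → ℝ :=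
  fun x => fderiv ℝ f x (Pi.single j 1)

/-- Iterated partial derivative `∂_{j_k}⋯∂_{j_1}`, with `j 0 = j_1` applied first. -/
noncomputable def itpd {n : ℕ} :
    ∀ {k : ℕ}, (Fin k → Fin n) → ((Fin n → ℝ) → ℝ) → ((Fin n → ℝ) → ℝ)
  | 0, _, f => f
  | _ + 1, j, f => itpd (fun m => j m.succ) (pd (j 0) f)

/-- The Taylor coordinate `β^i_{j_1…j_k}(ψ) = ∂_{j_k}⋯∂_{j_1}ψ^i(0)` on `G†`. -/
noncomputable def betaGen {n : ℕ} (k : ℕ) (j : Fin k → Fin n) (i : Fin n) : Gd n → ℝ :=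
  fun ψ => itpd j (fun x => ψ.val.toFun x i) 0

/-- The function `β^{-1}(ψ) = det(Dψ(0))⁻¹` on `G†`. -/
noncomputable def betaInv {n : ℕ} : Gd n → ℝ :=
  fun ψ => (Matrix.det (Matrix.of fun i j : Fin n => pd j (fun x => ψ.val.toFun x i) 0))⁻¹

/-- Generators of the algebra `F` of Taylor-coordinate functions on `G†`. -/
def genSet (n : ℕ) : Set (Gd n → ℝ) :=
  {g | ∃ (k : ℕ), 1 ≤ k ∧ ∃ (j : Fin k → Fin n) (i : Fin n), g = betaGen k j i} ∪ {betaInv}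

/-- The algebra `F` of functions on `G†` generated by the Taylor coordinates
`β^i_{j_1…j_k}` and `β^{-1}`. -/
noncomputable def Falg (n : ℕ) : Subalgebra ℝ (Gd n → ℝ) := Algebra.adjoin ℝ (genSet n)

/-- The right translation action `(ψ ◁ τ_b)(x) = ψ(x + b) − ψ(b)` as a diffeomorphism. -/
noncomputable def rActD {n : ℕ} (ψ : Diffeo n) (b : Fin n → ℝ) : Diffeo n where
  toFun := fun x => ψ.toFun (x + b) - ψ.toFun b
  invFun := fun y => ψ.invFun (y + ψ.toFun b) - b
  smooth := (ψ.smooth.comp (contDiff_id.add contDiff_const)).sub contDiff_const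
  smooth_inv := (ψ.smooth_inv.comp (contDiff_id.add contDiff_const)).sub contDiff_const
  left_inv := fun x => by
    have h1 : ψ.toFun (x + b) - ψ.toFun b + ψ.toFun b = ψ.toFun (x + b) := by abel
    simp only [h1, ψ.left_inv (x + b)]
    abel
  right_inv := fun y => by
    have h1 : ψ.invFun (y + ψ.toFun b) - b + b = ψ.invFun (y + ψ.toFun b) := by abel
    simp only [h1, ψ.right_inv (y + ψ.toFun b)]
    abel

/-- The right translation action on `G†`. -/
noncomputable def rActG {n : ℕ} (ψ : Gd n) (b : Fin n → ℝ) : Gd n :=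
  ⟨rActD ψ.val b, by
    show ψ.val.toFun (0 + b) - ψ.val.toFun b = 0
    rw [zero_add, sub_self]⟩

/-- The `ℓ`-th standard basis vector of `ℝⁿ`. -/
def eVec {n : ℕ} (ℓ : Fin n) : Fin n → ℝ := Pi.single ℓ 1

section Aux

variable {n : ℕ}

lemma Diffeo.ext' {a b : Diffeo n} (h1 : a.toFun = b.toFun) (h2 : a.invFun = b.invFun) :
    a = b := by
  cases a; cases b; cases h1; cases h2; rfl

lemma rActG_zero (ψ : Gd n) : rActG ψ 0 = ψ := by
  apply Subtype.ext
  apply Diffeo.ext'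
  · funext x
    show ψ.val.toFun (x + 0) - ψ.val.toFun 0 = ψ.val.toFun x
    rw [add_zero, ψ.prop, sub_zero]
  · funext y
    show ψ.val.invFun (y + ψ.val.toFun 0) - 0 = ψ.val.invFun y
    rw [ψ.prop, add_zero, sub_zero]

lemma itpd_succ {k : ℕ} (j : Fin (k + 1) → Fin n) (f : (Fin n → ℝ) → ℝ) :
    itpd j f = itpd (fun m => j m.succ) (pd (j 0) f) := rfl

lemma smooth_diff {f : (Fin n → ℝ) → ℝ} (hf : ContDiff ℝ (⊤ : ℕ∞) f) :
    Differentiable ℝ f := hf.differentiable (by simp)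

lemma pd_contDiff {j : Fin n} {f : (Fin n → ℝ) → ℝ} (hf : ContDiff ℝ (⊤ : ℕ∞) f) :
    ContDiff ℝ (⊤ : ℕ∞) (pd j f) := by
  have h := hf.fderiv_right (m := ((⊤ : ℕ∞) : WithTop ℕ∞)) (by exact_mod_cast le_top)
  exact (ContinuousLinearMap.apply ℝ ℝ (Pi.single j 1 : Fin n → ℝ)).contDiff.comp h

lemma itpd_contDiff {k : ℕ} (j : Fin k → Fin n) {f : (Fin n → ℝ) → ℝ}
    (hf : ContDiff ℝ (⊤ : ℕ∞) f) : ContDiff ℝ (⊤ : ℕ∞) (itpd j f) := by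
  induction k generalizing f with
  | zero => exact hf
  | succ k ih => exact ih _ (pd_contDiff hf)

lemma pd_comp_add {f : (Fin n → ℝ) → ℝ} (hf : ContDiff ℝ (⊤ : ℕ∞) f) (j : Fin n)
    (b : Fin n → ℝ) : pd j (fun x => f (x + b)) = fun x => pd j f (x + b) := by
  funext x
  have h1 : HasFDerivAt f (fderiv ℝ f (x + b)) (x + b) :=
    (smooth_diff hf (x + b)).hasFDerivAt
  have h2 : HasFDerivAt (fun x : Fin n → ℝ => x + b)
      (ContinuousLinearMap.id ℝ (Fin n → ℝ)) x := (hasFDerivAt_id x).add_const b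
  have h3 : HasFDerivAt (fun x => f (x + b))
      ((fderiv ℝ f (x + b)).comp (ContinuousLinearMap.id ℝ (Fin n → ℝ))) x := h1.comp x h2
  show fderiv ℝ (fun x => f (x + b)) x (Pi.single j 1) = _
  rw [h3.fderiv]
  rfl

lemma pd_sub_const (j : Fin n) (f : (Fin n → ℝ) → ℝ) (c : ℝ) :
    pd j (fun x => f x - c) = pd j f := by
  funext x
  show fderiv ℝ (fun x => f x - c) x (Pi.single j 1) = _
  rw [fderiv_sub_const]
  rfl

lemma itpd_comp_add {k : ℕ} (j : Fin k → Fin n) {f : (Fin n → ℝ) → ℝ}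
    (hf : ContDiff ℝ (⊤ : ℕ∞) f) (b : Fin n → ℝ) (x : Fin n → ℝ) :
    itpd j (fun y => f (y + b)) x = itpd j f (x + b) := by
  induction k generalizing f with
  | zero => rfl
  | succ k ih =>
    rw [itpd_succ, pd_comp_add hf, itpd_succ j f]
    exact ih _ (pd_contDiff hf)

lemma itpd_snoc {k : ℕ} (j : Fin k → Fin n) (ℓ : Fin n) (f : (Fin n → ℝ) → ℝ) :
    itpd (Fin.snoc j ℓ) f = pd ℓ (itpd j f) := by
  induction k generalizing f with
  | zero =>
    rw [itpd_succ]
    have h0 : (Fin.snoc j ℓ : Fin 1 → Fin n) 0 = ℓ := rfl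
    rw [h0]
    rfl
  | succ k ih =>
    rw [itpd_succ]
    have h0 : (Fin.snoc j ℓ : Fin (k + 2) → Fin n) 0 = j 0 := by
      have : (0 : Fin (k + 2)) = Fin.castSucc 0 := by simp
      rw [this, Fin.snoc_castSucc]
    have h1 : (fun m : Fin (k + 1) => (Fin.snoc j ℓ : Fin (k + 2) → Fin n) m.succ)
        = Fin.snoc (fun m : Fin k => j m.succ) ℓ := by
      funext m
      refine Fin.lastCases ?_ (fun m' => ?_) m
      · rw [Fin.succ_last, Fin.snoc_last, Fin.snoc_last]
      · rw [Fin.succ_castSucc, Fin.snoc_castSucc, Fin.snoc_castSucc]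
    rw [h0, h1, ih, itpd_succ j f]

lemma hasDerivAt_line {g : (Fin n → ℝ) → ℝ} (hg : ContDiff ℝ (⊤ : ℕ∞) g) (v : Fin n → ℝ) :
    HasDerivAt (fun t : ℝ => g (t • v)) (fderiv ℝ g 0 v) 0 := by
  have h1 : HasDerivAt (fun t : ℝ => t • v) ((1 : ℝ) • v) 0 := (hasDerivAt_id 0).smul_const v
  have h2 : HasFDerivAt g (fderiv ℝ g ((0 : ℝ) • v)) ((0 : ℝ) • v) :=
    (smooth_diff hg _).hasFDerivAt
  have h3 := h2.comp_hasDerivAt 0 h1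
  simp only [zero_smul, one_smul] at h3
  exact h3

lemma comp_contDiff (ψ : Diffeo n) (i : Fin n) :
    ContDiff ℝ (⊤ : ℕ∞) (fun x => ψ.toFun x i) :=
  (ContinuousLinearMap.proj (R := ℝ) (φ := fun _ : Fin n => ℝ) i).contDiff.comp ψ.smooth

end Aux
section Aux2

variable {n : ℕ}

lemma rAct_comp (ψ : Gd n) (b : Fin n → ℝ) (i : Fin n) :
    (fun x => (rActG ψ b).val.toFun x i)
      = fun x => (fun y => ψ.val.toFun y i) (x + b) - ψ.val.toFun b i := rfl

lemma pd_rAct (ψ : Gd n) (b : Fin n → ℝ) (i j : Fin n) :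
    pd j (fun x => (rActG ψ b).val.toFun x i)
      = fun x => pd j (fun y => ψ.val.toFun y i) (x + b) := by
  rw [rAct_comp, pd_sub_const, pd_comp_add (comp_contDiff ψ.val i)]

lemma betaGen_rAct (m : ℕ) (j : Fin (m + 1) → Fin n) (i : Fin n) (ψ : Gd n)
    (b : Fin n → ℝ) :
    betaGen (m + 1) j i (rActG ψ b) = itpd j (fun x => ψ.val.toFun x i) b := by
  show itpd j (fun x => (rActG ψ b).val.toFun x i) 0 = _
  rw [itpd_succ, pd_rAct, itpd_succ j,
    itpd_comp_add _ (pd_contDiff (comp_contDiff ψ.val i)) b 0, zero_add]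

lemma hasDerivAt_betaGen (ℓ : Fin n) (m : ℕ) (j : Fin (m + 1) → Fin n) (i : Fin n)
    (ψ : Gd n) :
    HasDerivAt (fun t : ℝ => betaGen (m + 1) j i (rActG ψ (t • eVec ℓ)))
      (betaGen (m + 2) (Fin.snoc j ℓ) i ψ) 0 := by
  have hsm : ContDiff ℝ (⊤ : ℕ∞) (itpd j (fun x => ψ.val.toFun x i)) :=
    itpd_contDiff j (comp_contDiff ψ.val i)
  have h := hasDerivAt_line hsm (eVec ℓ)
  have heq : (fun t : ℝ => betaGen (m + 1) j i (rActG ψ (t • eVec ℓ)))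
      = fun t : ℝ => itpd j (fun x => ψ.val.toFun x i) (t • eVec ℓ) := by
    funext t; exact betaGen_rAct m j i ψ _
  rw [heq]
  have hval : fderiv ℝ (itpd j (fun x => ψ.val.toFun x i)) 0 (eVec ℓ)
      = betaGen (m + 2) (Fin.snoc j ℓ) i ψ := by
    show pd ℓ (itpd j (fun x => ψ.val.toFun x i)) 0 = _
    rw [show betaGen (m + 2) (Fin.snoc j ℓ) i ψ
        = itpd (Fin.snoc j ℓ) (fun x => ψ.val.toFun x i) 0 from rfl, itpd_snoc]
  rwa [hval] at h

lemma deriv_betaGen (ℓ : Fin n) (k : ℕ) (hk : 1 ≤ k) (j : Fin k → Fin n) (i : Fin n) :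
    (fun ψ : Gd n => deriv (fun t : ℝ => betaGen k j i (rActG ψ (t • eVec ℓ))) 0)
      = betaGen (k + 1) (Fin.snoc j ℓ) i := by
  obtain ⟨m, rfl⟩ : ∃ m, k = m + 1 := ⟨k - 1, (Nat.succ_pred_eq_of_pos hk).symm⟩
  funext ψ
  exact (hasDerivAt_betaGen ℓ m j i ψ).deriv

end Aux2
section Aux3

variable {n : ℕ}

lemma smooth_diff' {f : (Fin n → ℝ) → (Fin n → ℝ)} (hf : ContDiff ℝ (⊤ : ℕ∞) f) :
    Differentiable ℝ f := hf.differentiable (by simp)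

lemma fderiv_comp_proj (ψ : Diffeo n) (i : Fin n) (x v : Fin n → ℝ) :
    fderiv ℝ (fun y => ψ.toFun y i) x v = fderiv ℝ ψ.toFun x v i := by
  have hA : HasFDerivAt ψ.toFun (fderiv ℝ ψ.toFun x) x :=
    (smooth_diff' ψ.smooth x).hasFDerivAt
  have h : HasFDerivAt (fun y => ψ.toFun y i)
      ((ContinuousLinearMap.proj (R := ℝ) (φ := fun _ : Fin n => ℝ) i).comp
        (fderiv ℝ ψ.toFun x)) x :=
    (ContinuousLinearMap.proj (R := ℝ) (φ := fun _ : Fin n => ℝ) i).hasFDerivAt.comp x hA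
  rw [h.fderiv]
  rfl

lemma det_ne_zero (ψ : Gd n) :
    Matrix.det (Matrix.of fun i j : Fin n => pd j (fun x => ψ.val.toFun x i) 0) ≠ 0 := by
  set A := fderiv ℝ ψ.val.toFun 0 with hAdef
  set B := fderiv ℝ ψ.val.invFun 0 with hBdef
  have hinv0 : ψ.val.invFun 0 = 0 := by
    have h := ψ.val.left_inv 0
    rwa [ψ.prop] at h
  have hA : HasFDerivAt ψ.val.toFun A 0 := (smooth_diff' ψ.val.smooth 0).hasFDerivAt
  have hB : HasFDerivAt ψ.val.invFun B 0 := (smooth_diff' ψ.val.smooth_inv 0).hasFDerivAt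
  have hA' : HasFDerivAt ψ.val.toFun A (ψ.val.invFun 0) := by rw [hinv0]; exact hA
  have hcomp : HasFDerivAt (ψ.val.toFun ∘ ψ.val.invFun) (A.comp B) 0 := hA'.comp 0 hB
  have hid : ψ.val.toFun ∘ ψ.val.invFun = id := funext ψ.val.right_inv
  rw [hid] at hcomp
  have hAB : A.comp B = ContinuousLinearMap.id ℝ (Fin n → ℝ) :=
    hcomp.unique (hasFDerivAt_id 0)
  -- matrices
  have hM : (Matrix.of fun i j : Fin n => pd j (fun x => ψ.val.toFun x i) 0)
      = LinearMap.toMatrix' (A : (Fin n → ℝ) →ₗ[ℝ] (Fin n → ℝ)) := by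
    ext i j
    rw [LinearMap.toMatrix'_apply]
    show pd j (fun x => ψ.val.toFun x i) 0 = A (Pi.single j 1) i
    have hs : (fun j' : Fin n => if j' = j then (1 : ℝ) else 0) = Pi.single j 1 := by
      funext j'; rw [Pi.single_apply]
    show fderiv ℝ (fun x => ψ.val.toFun x i) 0 (Pi.single j 1) = _
    rw [fderiv_comp_proj]
  have hdet : Matrix.det (LinearMap.toMatrix' (A : (Fin n → ℝ) →ₗ[ℝ] (Fin n → ℝ)))
      * Matrix.det (LinearMap.toMatrix' (B : (Fin n → ℝ) →ₗ[ℝ] (Fin n → ℝ))) = 1 := by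
    rw [← Matrix.det_mul, ← LinearMap.toMatrix'_comp]
    have : (A : (Fin n → ℝ) →ₗ[ℝ] (Fin n → ℝ)).comp
        (B : (Fin n → ℝ) →ₗ[ℝ] (Fin n → ℝ))
        = ((A.comp B : (Fin n → ℝ) →L[ℝ] (Fin n → ℝ)) :
            (Fin n → ℝ) →ₗ[ℝ] (Fin n → ℝ)) := rfl
    rw [this, hAB]
    show Matrix.det (LinearMap.toMatrix' (LinearMap.id : (Fin n → ℝ) →ₗ[ℝ] (Fin n → ℝ))) = 1
    rw [LinearMap.toMatrix'_id, Matrix.det_one]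
  rw [hM]
  exact left_ne_zero_of_mul_eq_one hdet

end Aux3
section Aux4

variable {n : ℕ}

lemma betaGen_one (j i : Fin n) (ψ : Gd n) :
    betaGen 1 (fun _ => j) i ψ = pd j (fun x => ψ.val.toFun x i) 0 := rfl

lemma betaGen_two (j ℓ i : Fin n) (ψ : Gd n) :
    betaGen 2 ![j, ℓ] i ψ = pd ℓ (pd j (fun x => ψ.val.toFun x i)) 0 := rfl

lemma betaInv_rAct (ψ : Gd n) (b : Fin n → ℝ) :
    betaInv (rActG ψ b)
      = (Matrix.det (Matrix.of fun i j : Fin n =>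
          pd j (fun x => ψ.val.toFun x i) b))⁻¹ := by
  show (Matrix.det (Matrix.of fun i j : Fin n =>
      pd j (fun x => (rActG ψ b).val.toFun x i) 0))⁻¹ = _
  congr 2
  ext i j
  have h := congrFun (pd_rAct ψ b i j) 0
  simpa [zero_add] using h

/-- The derivative of `betaInv` under the infinitesimal translation. -/
noncomputable def Dval {n : ℕ} (ℓ : Fin n) : Gd n → ℝ := fun ψ =>
  ∑ σ : Equiv.Perm (Fin n), ((Equiv.Perm.sign σ : ℤ) : ℝ) *
    ∑ i : Fin n, (∏ j ∈ Finset.univ.erase i, betaGen 1 (fun _ => j) (σ j) ψ)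
      * betaGen 2 ![i, ℓ] (σ i) ψ

lemma hasDerivAt_betaInv (ℓ : Fin n) (ψ : Gd n) :
    HasDerivAt (fun t : ℝ => betaInv (rActG ψ (t • eVec ℓ)))
      (-(Dval ℓ ψ) * betaInv ψ ^ 2) 0 := by
  classical
  have hent : ∀ (i j : Fin n), HasDerivAt (fun t : ℝ =>
      pd j (fun x => ψ.val.toFun x i) (t • eVec ℓ))
      (pd ℓ (pd j (fun x => ψ.val.toFun x i)) 0) 0 := fun i j =>
    hasDerivAt_line (pd_contDiff (comp_contDiff ψ.val i)) (eVec ℓ)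
  set F : ℝ → ℝ := fun t => ∑ σ : Equiv.Perm (Fin n), ((Equiv.Perm.sign σ : ℤ) : ℝ) *
      ∏ i : Fin n, pd i (fun x => ψ.val.toFun x (σ i)) (t • eVec ℓ) with hF
  have hcurve : (fun t : ℝ => betaInv (rActG ψ (t • eVec ℓ))) = fun t => (F t)⁻¹ := by
    funext t
    rw [betaInv_rAct, Matrix.det_apply']
    simp [hF, Matrix.of_apply]
  have hFder : HasDerivAt F (∑ σ : Equiv.Perm (Fin n), ((Equiv.Perm.sign σ : ℤ) : ℝ) *
      ∑ i : Fin n, (∏ j ∈ Finset.univ.erase i,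
          pd j (fun x => ψ.val.toFun x (σ j)) ((0 : ℝ) • eVec ℓ))
        • pd ℓ (pd i (fun x => ψ.val.toFun x (σ i))) 0) 0 := by
    apply HasDerivAt.fun_sum
    intro σ _
    exact (HasDerivAt.fun_finset_prod (fun i _ => hent (σ i) i)).const_mul _
  have h00 : F 0 = Matrix.det (Matrix.of fun i j : Fin n =>
      pd j (fun x => ψ.val.toFun x i) 0) := by
    rw [Matrix.det_apply']
    simp [hF, Matrix.of_apply, zero_smul]
  have hne : F 0 ≠ 0 := by rw [h00]; exact det_ne_zero ψ
  have hinv := hFder.inv hne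
  rw [hcurve]
  refine hinv.congr_deriv ?_
  have hbi : betaInv ψ = (F 0)⁻¹ := by rw [h00]; rfl
  have hD : Dval ℓ ψ = ∑ σ : Equiv.Perm (Fin n), ((Equiv.Perm.sign σ : ℤ) : ℝ) *
      ∑ i : Fin n, (∏ j ∈ Finset.univ.erase i,
          pd j (fun x => ψ.val.toFun x (σ j)) ((0 : ℝ) • eVec ℓ))
        • pd ℓ (pd i (fun x => ψ.val.toFun x (σ i))) 0 := by
    simp [Dval, betaGen_one, betaGen_two, smul_eq_mul, zero_smul]
  rw [hbi, ← hD, div_eq_mul_inv, ← inv_pow, neg_mul]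

lemma deriv_betaInv_mem (ℓ : Fin n) :
    (fun ψ : Gd n => deriv (fun t : ℝ => betaInv (rActG ψ (t • eVec ℓ))) 0) ∈ Falg n := by
  classical
  have heq : (fun ψ : Gd n => deriv (fun t : ℝ => betaInv (rActG ψ (t • eVec ℓ))) 0)
      = -(∑ σ : Equiv.Perm (Fin n), ((Equiv.Perm.sign σ : ℤ) : ℝ) •
          ∑ i : Fin n, (∏ j ∈ Finset.univ.erase i, betaGen 1 (fun _ => j) (σ j))
            * betaGen 2 ![i, ℓ] (σ i)) * betaInv ^ 2 := by
    funext ψ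
    rw [(hasDerivAt_betaInv ℓ ψ).deriv]
    simp [Dval, Finset.sum_apply, Finset.prod_apply, Pi.mul_apply, Pi.neg_apply,
      Pi.pow_apply, Pi.smul_apply, smul_eq_mul]
  rw [heq]
  have hb1 : ∀ (j i : Fin n), betaGen 1 (fun _ => j) i ∈ Falg n := fun j i =>
    Algebra.subset_adjoin (Or.inl ⟨1, le_rfl, fun _ => j, i, rfl⟩)
  have hb2 : ∀ (j i : Fin n), betaGen 2 ![j, ℓ] i ∈ Falg n := fun j i =>
    Algebra.subset_adjoin (Or.inl ⟨2, by norm_num, ![j, ℓ], i, rfl⟩)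
  have hbi : betaInv ∈ Falg n := Algebra.subset_adjoin (Or.inr rfl)
  refine mul_mem (neg_mem (Subalgebra.sum_mem _ fun σ _ => SMulMemClass.smul_mem _
    (Subalgebra.sum_mem _ fun i _ => mul_mem
      (Subalgebra.prod_mem _ fun j _ => hb1 j (σ j)) (hb2 i (σ i))))) (pow_mem hbi 2)

end Aux4

/-- The algebra `F` is stable under the infinitesimal translation action: for `f ∈ F`
and `1 ≤ ℓ ≤ n`, the function `ψ ↦ (d/dt)|₀ f(ψ ◁ τ_{t·e_ℓ})` is well defined and again
belongs to `F`; on the generators it is given by `β^i_{j₁…j_k} ↦ β^i_{j₁…j_k ℓ}`. -/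
theorem Falg_infinitesimal_translation_stable (n : ℕ) (ℓ : Fin n)
    (f : Gd n → ℝ) (hf : f ∈ Falg n) :
    (∀ ψ : Gd n, ∃ d : ℝ,
        HasDerivAt (fun t : ℝ => f (rActG ψ (t • eVec ℓ))) d 0) ∧
    (fun ψ : Gd n =>
        deriv (fun t : ℝ => f (rActG ψ (t • eVec ℓ))) 0) ∈ Falg n ∧
    ∀ (k : ℕ), 1 ≤ k → ∀ (j : Fin k → Fin n) (i : Fin n),
      (fun ψ : Gd n =>
          deriv (fun t : ℝ => betaGen k j i (rActG ψ (t • eVec ℓ))) 0) =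
        betaGen (k + 1) (Fin.snoc j ℓ) i := by
  have key : ∀ g : Gd n → ℝ, g ∈ Algebra.adjoin ℝ (genSet n) →
      (∀ ψ : Gd n, ∃ d : ℝ,
        HasDerivAt (fun t : ℝ => g (rActG ψ (t • eVec ℓ))) d 0) ∧
      (fun ψ : Gd n => deriv (fun t : ℝ => g (rActG ψ (t • eVec ℓ))) 0) ∈ Falg n := by
    intro g hg
    induction hg using Algebra.adjoin_induction with
    | mem g hgen =>
      rcases hgen with ⟨k, hk, j, i, rfl⟩ | hbi
      · obtain ⟨m, rfl⟩ : ∃ m, k = m + 1 := ⟨k - 1, (Nat.succ_pred_eq_of_pos hk).symm⟩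
        refine ⟨fun ψ => ⟨_, hasDerivAt_betaGen ℓ m j i ψ⟩, ?_⟩
        rw [deriv_betaGen ℓ (m + 1) hk j i]
        exact Algebra.subset_adjoin (Or.inl ⟨m + 2, by omega, Fin.snoc j ℓ, i, rfl⟩)
      · rw [show g = betaInv from hbi]
        exact ⟨fun ψ => ⟨_, hasDerivAt_betaInv ℓ ψ⟩, deriv_betaInv_mem ℓ⟩
    | algebraMap r =>
      refine ⟨fun ψ => ⟨0, hasDerivAt_const 0 r⟩, ?_⟩
      have : (fun ψ : Gd n => deriv
          (fun t : ℝ => (algebraMap ℝ (Gd n → ℝ) r) (rActG ψ (t • eVec ℓ))) 0)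
          = fun _ => 0 := by
        funext ψ
        exact deriv_const 0 r
      rw [this]
      exact zero_mem _
    | add g₁ g₂ hm₁ hm₂ h₁ h₂ =>
      refine ⟨fun ψ => ?_, ?_⟩
      · obtain ⟨d₁, hd₁⟩ := h₁.1 ψ
        obtain ⟨d₂, hd₂⟩ := h₂.1 ψ
        exact ⟨d₁ + d₂, hd₁.add hd₂⟩
      · have heq : (fun ψ : Gd n => deriv
            (fun t : ℝ => (g₁ + g₂) (rActG ψ (t • eVec ℓ))) 0)
            = (fun ψ : Gd n => deriv (fun t : ℝ => g₁ (rActG ψ (t • eVec ℓ))) 0)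
              + fun ψ : Gd n => deriv (fun t : ℝ => g₂ (rActG ψ (t • eVec ℓ))) 0 := by
          funext ψ
          obtain ⟨d₁, hd₁⟩ := h₁.1 ψ
          obtain ⟨d₂, hd₂⟩ := h₂.1 ψ
          show deriv (fun t : ℝ => g₁ (rActG ψ (t • eVec ℓ)) + g₂ (rActG ψ (t • eVec ℓ))) 0 = _
          rw [(hd₁.fun_add hd₂).deriv, Pi.add_apply, hd₁.deriv, hd₂.deriv]
        rw [heq]
        exact add_mem h₁.2 h₂.2
    | mul g₁ g₂ hm₁ hm₂ h₁ h₂ =>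
      refine ⟨fun ψ => ?_, ?_⟩
      · obtain ⟨d₁, hd₁⟩ := h₁.1 ψ
        obtain ⟨d₂, hd₂⟩ := h₂.1 ψ
        exact ⟨_, hd₁.mul hd₂⟩
      · have heq : (fun ψ : Gd n => deriv
            (fun t : ℝ => (g₁ * g₂) (rActG ψ (t • eVec ℓ))) 0)
            = (fun ψ : Gd n => deriv (fun t : ℝ => g₁ (rActG ψ (t • eVec ℓ))) 0) * g₂
              + g₁ * fun ψ : Gd n => deriv (fun t : ℝ => g₂ (rActG ψ (t • eVec ℓ))) 0 := by
          funext ψ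
          obtain ⟨d₁, hd₁⟩ := h₁.1 ψ
          obtain ⟨d₂, hd₂⟩ := h₂.1 ψ
          show deriv (fun t : ℝ => g₁ (rActG ψ (t • eVec ℓ)) * g₂ (rActG ψ (t • eVec ℓ))) 0 = _
          have h0 : rActG ψ ((0 : ℝ) • eVec ℓ) = ψ := by rw [zero_smul]; exact rActG_zero ψ
          rw [(hd₁.fun_mul hd₂).deriv, h0]
          simp only [Pi.add_apply, Pi.mul_apply, hd₁.deriv, hd₂.deriv]
        rw [heq]
        exact add_mem (mul_mem h₁.2 hm₂) (mul_mem hm₁ h₂.2)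
  obtain ⟨h1, h2⟩ := key f hf
  exact ⟨h1, h2, fun k hk j i => deriv_betaGen ℓ k hk j i⟩
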